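/- For the operator L(y) = y'' + (αx + β)y' with α ≠ 0, for every n ≥ 0 there is a unique monic polynomial p_n of degree n with L(p_n) = αn · p_n. -/

import Mathlib

open Polynomial

noncomputable def TT (α β : ℝ) (n : ℕ) (q : Polynomial ℝ) : Polynomial ℝ :=
  (α * n) • q - (derivative (derivative q) + (C α * X + C β) * derivative q)

lemma TT_add (α β : ℝ) (n : ℕ) (p q : Polynomial ℝ) :
    TT α β n (p + q) = TT α β n p + TT α β n q := by
  unfold TT; simp only [derivative_add, smul_add]; ring

lemma TT_zero (α β : ℝ) (n : ℕ) : TT α β n 0 = 0 := by simp [TT]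

lemma coeffT (α β : ℝ) (n : ℕ) (q : Polynomial ℝ) (k : ℕ) :
    (TT α β n q).coeff k =
      (α * n - α * k) * q.coeff k - β * ((k : ℝ) + 1) * q.coeff (k + 1)
        - ((k : ℝ) + 1) * ((k : ℝ) + 2) * q.coeff (k + 2) := by
  unfold TT
  have h1 : (C α * X + C β) * derivative q
      = C α * (X * derivative q) + C β * derivative q := by ring
  rcases k with _ | k
  · simp [h1, coeff_derivative, mul_coeff_zero]; ring
  · simp [h1, coeff_derivative, coeff_X_mul]; ring

lemma eig_ne (α : ℝ) (hα : α ≠ 0) {k n : ℕ} (hk : k < n) : α * n - α * k ≠ 0 := by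
  have h1 : (k : ℝ) < n := by exact_mod_cast hk
  have h2 : α * n - α * k = α * ((n : ℝ) - k) := by ring
  rw [h2]; exact mul_ne_zero hα (by linarith)

lemma exists_TT (α β : ℝ) (hα : α ≠ 0) (n : ℕ) (d : ℕ) :
    ∀ r : Polynomial ℝ, r.natDegree ≤ d → r.degree < (n : WithBot ℕ) →
      ∃ q : Polynomial ℝ, q.degree < (n : WithBot ℕ) ∧ TT α β n q = r := by
  induction d using Nat.strong_induction_on with
  | _ d IH =>
    intro r hrd hrn
    by_cases hr0 : r = 0
    · refine ⟨0, ?_, by simp [TT_zero, hr0]⟩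
      rw [degree_zero]
      exact_mod_cast WithBot.bot_lt_coe n
    have hmn : r.natDegree < n := (natDegree_lt_iff_degree_lt hr0).mpr hrn
    set m := r.natDegree with hm
    set c := r.leadingCoeff / (α * n - α * m) with hc
    set q0 := C c * X ^ m with hq0
    have hmn' : (m : WithBot ℕ) < (n : WithBot ℕ) := by exact_mod_cast hmn
    have hq0deg : q0.degree < (n : WithBot ℕ) :=
      lt_of_le_of_lt (degree_C_mul_X_pow_le m c) hmn'
    have hq0coeff : ∀ k, q0.coeff k = if k = m then c else 0 := by
      intro k; simp [hq0, coeff_X_pow]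
    have hTk : ∀ k, m ≤ k → (TT α β n q0).coeff k = if k = m then r.leadingCoeff else 0 := by
      intro k hk
      rw [coeffT, hq0coeff, hq0coeff, hq0coeff,
        if_neg (show ¬(k + 1 = m) by omega), if_neg (show ¬(k + 2 = m) by omega)]
      by_cases hkm : k = m
      · subst hkm
        rw [if_pos rfl, if_pos rfl, hc]
        field_simp [eig_ne α hα hmn]
        have hnm : (n:ℝ) - m ≠ 0 := sub_ne_zero.mpr (by exact_mod_cast hmn.ne')
        simp only [mul_zero, zero_mul, sub_zero]
        exact mul_div_cancel_left₀ _ hnm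
      · rw [if_neg hkm, if_neg hkm]; ring
    set s := r - TT α β n q0 with hs
    have hscoeff : ∀ k, m ≤ k → s.coeff k = 0 := by
      intro k hk
      rw [hs, coeff_sub, hTk k hk]
      by_cases hkm : k = m
      · subst hkm; rw [if_pos rfl]; exact sub_eq_zero.mpr rfl
      · rw [if_neg hkm, coeff_eq_zero_of_natDegree_lt (by omega), sub_zero]
    by_cases hs0 : s = 0
    · refine ⟨q0, hq0deg, ?_⟩
      rw [hs] at hs0
      exact (sub_eq_zero.mp hs0).symm
    · have hm1 : 1 ≤ m := by
        by_contra h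
        push_neg at h
        apply hs0
        ext k
        simp only [coeff_zero]
        exact hscoeff k (by omega)
      have hsd : s.natDegree ≤ m - 1 := by
        rw [natDegree_le_iff_coeff_eq_zero]
        intro N hN
        exact hscoeff N (by omega)
      have hsn : s.degree < (n : WithBot ℕ) :=
        (natDegree_lt_iff_degree_lt hs0).mp (by omega)
      obtain ⟨q', hq'deg, hTq'⟩ := IH (m - 1) (by omega) s hsd hsn
      refine ⟨q0 + q', ?_, ?_⟩
      · exact lt_of_le_of_lt (degree_add_le _ _) (max_lt hq0deg hq'deg)
      · rw [TT_add, hTq', hs]; ring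
lemma TT_sub (α β : ℝ) (n : ℕ) (p q : Polynomial ℝ) :
    TT α β n (p - q) = TT α β n p - TT α β n q := by
  unfold TT
  simp only [derivative_sub, smul_sub]
  ring
lemma TT_ne_zero (α β : ℝ) (hα : α ≠ 0) {n : ℕ} {q : Polynomial ℝ} (hq : q ≠ 0)
    (hd : q.natDegree < n) : TT α β n q ≠ 0 := by
  intro h
  have hc := coeffT α β n q q.natDegree
  have e1 : q.coeff (q.natDegree + 1) = 0 := coeff_eq_zero_of_natDegree_lt (by omega)
  have e2 : q.coeff (q.natDegree + 2) = 0 := coeff_eq_zero_of_natDegree_lt (by omega)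
  rw [h, coeff_zero, e1, e2] at hc
  simp only [mul_zero, sub_zero] at hc
  have hlc : q.coeff q.natDegree ≠ 0 := fun h0 => hq (leadingCoeff_eq_zero.mp h0)
  exact (mul_ne_zero (eig_ne α hα hd) hlc) hc.symm
theorem stmt_8 (α β : ℝ) (hα : α ≠ 0) :
    let L : Polynomial ℝ → Polynomial ℝ :=
      fun p => derivative (derivative p) + (C α * X + C β) * derivative p
    ∀ n : ℕ, ∃! p : Polynomial ℝ, p.Monic ∧ p.natDegree = n ∧ L p = (α * n) • p := by
  intro L n
  have hLT : ∀ p : Polynomial ℝ, TT α β n p = (α * n) • p - L p := fun p => rfl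
  -- the RHS to solve
  set r : Polynomial ℝ := -(TT α β n (X ^ n)) with hr
  have hrdeg : r.degree < (n : WithBot ℕ) := by
    rw [hr, degree_neg]
    rw [degree_lt_iff_coeff_zero]
    intro m hm
    have hm' : n ≤ m := by exact_mod_cast hm
    rw [coeffT, coeff_X_pow, coeff_X_pow, coeff_X_pow,
      if_neg (show ¬(m + 1 = n) by omega), if_neg (show ¬(m + 2 = n) by omega)]
    by_cases hmn : m = n
    · subst hmn; rw [if_pos rfl]; ring
    · rw [if_neg hmn]; ring
  obtain ⟨q, hqdeg, hTq⟩ := exists_TT α β hα n r.natDegree r le_rfl hrdeg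
  set p : Polynomial ℝ := X ^ n + q with hp
  have hmonic : p.Monic := monic_X_pow_add hqdeg
  have hdeg : p.natDegree = n := by
    have h1 : q.degree < (X ^ n : Polynomial ℝ).degree := by
      rwa [degree_X_pow]
    have h2 : p.degree = (n : WithBot ℕ) := by
      rw [hp, add_comm, degree_add_eq_right_of_degree_lt h1, degree_X_pow]
    exact natDegree_eq_of_degree_eq_some h2
  have hTp : TT α β n p = 0 := by
    rw [hp, TT_add, hTq, hr]; ring
  have heig : L p = (α * n) • p := by
    have := hLT p
    rw [hTp] at this
    exact (sub_eq_zero.mp this.symm).symm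
  refine ⟨p, ⟨hmonic, hdeg, heig⟩, ?_⟩
  rintro p' ⟨hm', hd', he'⟩
  by_contra hne
  have hq2 : p' - p ≠ 0 := sub_ne_zero.mpr hne
  have hT2 : TT α β n (p' - p) = 0 := by
    rw [TT_sub, hLT, hLT, he', heig]; ring
  have hdlt : (p' - p).degree < (n : WithBot ℕ) := by
    have h3 : p'.degree = p.degree := by
      rw [degree_eq_natDegree hm'.ne_zero, degree_eq_natDegree hmonic.ne_zero, hd', hdeg]
    calc (p' - p).degree < p'.degree :=
          degree_sub_lt h3 hm'.ne_zero (by rw [hm'.leadingCoeff, hmonic.leadingCoeff])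
      _ = (n : WithBot ℕ) := by rw [degree_eq_natDegree hm'.ne_zero, hd']
  exact TT_ne_zero α β hα hq2 ((natDegree_lt_iff_degree_lt hq2).mpr hdlt) hT2
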